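/- A sum of reciprocal polynomials of the form Σ_{i=0}^{⌊n/2⌋} γ_i t^i (1+t)^{n-2i} with all γ_i ≥ 0 and γ_0 > 0 is unimodal: writing h(t) = Σ_{j=0}^n h_j t^j, one has h_0 ≤ h_1 ≤ … ≤ h_{⌊n/2⌋}. -/
import Mathlib


open Polynomial

theorem stmt_11 (n : ℕ) (γ : ℕ → ℝ) (hγ : ∀ i, 0 ≤ γ i) (h0 : 0 < γ 0) :
    ∀ j : ℕ, j + 1 ≤ n / 2 →
      (∑ i ∈ Finset.range (n / 2 + 1), C (γ i) * X ^ i * (1 + X) ^ (n - 2 * i)).coeff j ≤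
      (∑ i ∈ Finset.range (n / 2 + 1), C (γ i) * X ^ i * (1 + X) ^ (n - 2 * i)).coeff (j + 1) := by
  intro j hj
  rw [Polynomial.finset_sum_coeff, Polynomial.finset_sum_coeff]
  apply Finset.sum_le_sum
  intro i _
  have key : ∀ k, (C (γ i) * X ^ i * (1 + X) ^ (n - 2 * i)).coeff k
      = γ i * (if i ≤ k then (((n - 2 * i).choose (k - i) : ℝ)) else 0) := by
    intro k
    rw [mul_assoc, mul_comm (X ^ i), coeff_C_mul, coeff_mul_X_pow']
    by_cases h : i ≤ k <;> simp [h, coeff_one_add_X_pow]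
  rw [key, key]
  by_cases h : i ≤ j
  · rw [if_pos h, if_pos (h.trans (Nat.le_succ j))]
    apply mul_le_mul_of_nonneg_left _ (hγ i)
    rw [show j + 1 - i = (j - i) + 1 by omega]
    exact_mod_cast Nat.choose_le_succ_of_lt_half_left (by omega)
  · rw [if_neg h, mul_zero]
    by_cases h' : i ≤ j + 1
    · rw [if_pos h']
      exact mul_nonneg (hγ i) (Nat.cast_nonneg _)
    · rw [if_neg h', mul_zero]
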